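/- arXiv:2212.03565 — 2 statements merged into one kernel-verified Lean document; each statement's English description precedes it below -/
import Mathlib

section
/- Recursive boolean isomorphism is a bisimulation with respect to theory extension: if U is recursively boolean isomorphic to V and U' is an extension of U in the same language, then there is an extension V' of V in the same language such that U' is recursively boolean isomorphic to V'; and symmetrically, if V' is an extension of V in the same language, then there is an extension U' of U in the same language such that U' is recursively boolean isomorphic to V'. -/
open FirstOrder Language

namespace Formalization

/-- An `Encodable` instance for bounded formulas, derived from Mathlib's encoding. -/
def sigmaBFEncodable (L : Language) (α : Type*) [Encodable α]
    [∀ n, Encodable (L.Functions n)] [∀ n, Encodable (L.Relations n)] :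
    Encodable (Σ n, L.BoundedFormula α n) :=
  haveI : Encodable (Σ i, L.Functions i) := Sigma.encodable
  haveI : Encodable (Σ i, L.Relations i) := Sigma.encodable
  Encodable.ofLeftInjection
    (fun φ => φ.2.listEncode)
    (fun l => (BoundedFormula.listDecode l)[0]?)
    (fun φ => BoundedFormula.encoding.decode_encode φ)

instance sentenceEncodable (L : Language)
    [∀ n, Encodable (L.Functions n)] [∀ n, Encodable (L.Relations n)] :
    Encodable L.Sentence :=
  haveI := sigmaBFEncodable L Empty
  Encodable.ofLeftInjection
    (fun φ => (⟨0, φ⟩ : Σ n, L.BoundedFormula Empty n))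
    (fun p => match p with
      | ⟨0, φ⟩ => some φ
      | ⟨_ + 1, _⟩ => none)
    (fun _ => rfl)

section TheoryNotions

variable {L : Language} [∀ n, Encodable (L.Functions n)] [∀ n, Encodable (L.Relations n)]

/-- The set of Gödel codes of theorems of a theory. -/
def TheoremSet (T : L.Theory) : Set ℕ :=
  {n | ∃ φ : L.Sentence, Encodable.encode φ = n ∧ T ⊨ᵇ φ}

/-- The set of Gödel codes of sentences refuted by a theory. -/
def RefutableSet (T : L.Theory) : Set ℕ :=
  {n | ∃ φ : L.Sentence, Encodable.encode φ = n ∧ T ⊨ᵇ ∼φ}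

/-- A theory is recursively enumerable if its set of theorem-codes is r.e. -/
def IsRE (T : L.Theory) : Prop := REPred (· ∈ TheoremSet T)

/-- A theory is decidable if its set of theorem-codes is computable. -/
def IsDecidableTheory (T : L.Theory) : Prop := ComputablePred (· ∈ TheoremSet T)

/-- A theory is consistent if it does not prove `⊥`. -/
def Consistent (T : L.Theory) : Prop := ¬ T ⊨ᵇ (⊥ : L.Sentence)

/-- `Extends T T'` : `T'` is an extension of `T` in the same language,
i.e. every theorem of `T` is a theorem of `T'`. -/
def Extends (T T' : L.Theory) : Prop := ∀ φ : L.Sentence, T ⊨ᵇ φ → T' ⊨ᵇ φ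

/-- A theory is complete if it decides every sentence. -/
def IsCompleteTheory (T : L.Theory) : Prop := ∀ φ : L.Sentence, T ⊨ᵇ φ ∨ T ⊨ᵇ ∼φ

/-- Hereditarily undecidable: every consistent r.e. sub-theory (in the same language)
is undecidable. -/
def HeredUndecidable (T : L.Theory) : Prop :=
  ∀ W : L.Theory, IsRE W → Consistent W → Extends W T → ¬ IsDecidableTheory W

/-- Essentially undecidable: every consistent r.e. extension (in the same language)
is undecidable. -/
def EssUndecidable (T : L.Theory) : Prop :=
  ∀ W : L.Theory, IsRE W → Consistent W → Extends T W → ¬ IsDecidableTheory W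

/-- Essentially hereditarily undecidable: every consistent r.e. extension (in the same
language) is hereditarily undecidable. -/
def EssHeredUndecidable (T : L.Theory) : Prop :=
  ∀ W : L.Theory, IsRE W → Consistent W → Extends T W → HeredUndecidable W

end TheoryNotions

end Formalization

namespace Formalization

section Iso

variable {L L' : Language}
  [∀ n, Encodable (L.Functions n)] [∀ n, Encodable (L.Relations n)]
  [∀ n, Encodable (L'.Functions n)] [∀ n, Encodable (L'.Relations n)]

/-- A recursive boolean isomorphism between the theories `U` and `V`:
a computable bijection between the sentences that commutes with the boolean
connectives and preserves provability in both directions. -/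
structure RecBoolIso (U : L.Theory) (V : L'.Theory) : Type _ where
  toFun : L.Sentence → L'.Sentence
  bijective : Function.Bijective toFun
  computable : ∃ f : ℕ → ℕ, Computable f ∧
    ∀ φ : L.Sentence, f (Encodable.encode φ) = Encodable.encode (toFun φ)
  map_bot : toFun ⊥ = ⊥
  map_top : toFun ⊤ = ⊤
  map_not : ∀ φ, toFun (∼φ) = ∼(toFun φ)
  map_imp : ∀ φ ψ, toFun (φ ⟹ ψ) = toFun φ ⟹ toFun ψ
  map_inf : ∀ φ ψ, toFun (φ ⊓ ψ) = toFun φ ⊓ toFun ψ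
  map_sup : ∀ φ ψ, toFun (φ ⊔ ψ) = toFun φ ⊔ toFun ψ
  provable_iff : ∀ φ, U ⊨ᵇ φ ↔ V ⊨ᵇ toFun φ

end Iso

end Formalization

namespace Formalization



variable {L : FirstOrder.Language}

/-- Iterated implication: `impChain [φ₁,…,φₙ] φ = φ₁ ⟹ (… ⟹ (φₙ ⟹ φ))`. -/
def impChain (l : List L.Sentence) (φ : L.Sentence) : L.Sentence := l.foldr (· ⟹ ·) φ

theorem realize_impChain {M : Type*} [L.Structure M] [Nonempty M]
    (l : List L.Sentence) (φ : L.Sentence) :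
    M ⊨ impChain l φ ↔ ((∀ ψ ∈ l, M ⊨ ψ) → M ⊨ φ) := by
  induction l with
  | nil => simp [impChain]
  | cons ψ l ih =>
    have : (impChain (ψ :: l) φ) = ψ ⟹ impChain l φ := rfl
    rw [this]
    have himp : (M ⊨ ψ ⟹ impChain l φ) ↔ (M ⊨ ψ → M ⊨ impChain l φ) :=
      BoundedFormula.realize_imp
    rw [himp, ih]
    constructor
    · intro h hall
      exact h (hall ψ List.mem_cons_self) (fun χ hχ => hall χ (List.mem_cons_of_mem ψ hχ))
    · intro h hψ hl
      exact h (fun χ hχ => by rcases List.mem_cons.1 hχ with rfl | hχ'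
                              exacts [hψ, hl χ hχ'])

/-- Monotonicity of semantic consequence. -/
theorem models_mono {T T' : L.Theory} (h : T ⊆ T') {φ : L.Sentence}
    (hφ : T ⊨ᵇ φ) : T' ⊨ᵇ φ := by
  rw [Theory.models_sentence_iff] at hφ ⊢
  intro M
  haveI : T.Model M := (Theory.ModelType.is_model M).mono h
  exact hφ ⟨M⟩

/-- Modus ponens along a chain. -/
theorem models_of_impChain {T : L.Theory} {l : List L.Sentence} {φ : L.Sentence}
    (hc : T ⊨ᵇ impChain l φ) (hl : ∀ ψ ∈ l, T ⊨ᵇ ψ) : T ⊨ᵇ φ := by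
  rw [Theory.models_sentence_iff] at hc ⊢
  intro M
  exact (realize_impChain l φ).1 (hc M)
    (fun ψ hψ => Theory.models_sentence_iff.1 (hl ψ hψ) M)

/-- Semantic deduction theorem, compact form: if `T ⊨ φ`, there is a finite list of
members of `T` such that the corresponding implication chain is valid. -/
theorem exists_impChain_of_models {T : L.Theory} {φ : L.Sentence} (h : T ⊨ᵇ φ) :
    ∃ l : List L.Sentence, (∀ ψ ∈ l, ψ ∈ T) ∧ (∅ : L.Theory) ⊨ᵇ impChain l φ := by
  obtain ⟨T0, hsub, hT0⟩ := Theory.models_iff_finset_models.1 h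
  refine ⟨T0.toList, fun ψ hψ => hsub (by simpa using hψ), ?_⟩
  rw [Theory.models_sentence_iff]
  intro M
  rw [realize_impChain]
  intro hall
  haveI : (M : Type _) ⊨ (T0 : L.Theory) :=
    (Theory.model_iff ((T0 : L.Theory))).2 (fun ψ hψ => hall ψ (by simpa using hψ))
  exact Theory.models_sentence_iff.1 hT0 ⟨(M : Type _)⟩


theorem impChain_map {L L' : Language}
    [∀ n, Encodable (L.Functions n)] [∀ n, Encodable (L.Relations n)]
    [∀ n, Encodable (L'.Functions n)] [∀ n, Encodable (L'.Relations n)]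
    {U : L.Theory} {V : L'.Theory} (Φ : RecBoolIso U V)
    (l : List L.Sentence) (φ : L.Sentence) :
    Φ.toFun (impChain l φ) = impChain (l.map Φ.toFun) (Φ.toFun φ) := by
  induction l with
  | nil => rfl
  | cons ψ l ih =>
    show Φ.toFun (ψ ⟹ impChain l φ) = _
    rw [Φ.map_imp, ih]
    rfl

/-- Recursive boolean isomorphism is a bisimulation with respect to theory
extension: the zig and the zag conditions. -/
theorem statement_2 {L L' : Language}
    [∀ n, Encodable (L.Functions n)] [∀ n, Encodable (L.Relations n)]
    [∀ n, Encodable (L'.Functions n)] [∀ n, Encodable (L'.Relations n)]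
    (U : L.Theory) (V : L'.Theory) (h : Nonempty (RecBoolIso U V)) :
    (∀ U' : L.Theory, Extends U U' →
      ∃ V' : L'.Theory, Extends V V' ∧ Nonempty (RecBoolIso U' V')) ∧
    (∀ V' : L'.Theory, Extends V V' →
      ∃ U' : L.Theory, Extends U U' ∧ Nonempty (RecBoolIso U' V')) := by
  obtain ⟨Φ⟩ := h
  constructor
  · -- zig
    intro U' hUU'
    refine ⟨Φ.toFun '' {ψ | U' ⊨ᵇ ψ}, ?_, ⟨{ Φ with provable_iff := ?_ }⟩⟩
    · intro ψ hV
      obtain ⟨χ, rfl⟩ := Φ.bijective.2 ψ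
      exact Theory.models_sentence_of_mem ⟨χ, hUU' χ ((Φ.provable_iff χ).2 hV), rfl⟩
    · intro φ
      constructor
      · intro hφ
        exact Theory.models_sentence_of_mem ⟨φ, hφ, rfl⟩
      · intro hφ
        obtain ⟨l, hl, hc⟩ := exists_impChain_of_models hφ
        have hpre : ∀ l : List L'.Sentence, (∀ ψ ∈ l, ψ ∈ Φ.toFun '' {ψ | U' ⊨ᵇ ψ}) →
            ∃ l0 : List L.Sentence, l = l0.map Φ.toFun ∧ ∀ χ ∈ l0, U' ⊨ᵇ χ := by
          intro l
          induction l with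
          | nil => exact fun _ => ⟨[], rfl, by simp⟩
          | cons ψ l ih =>
            intro hmem
            obtain ⟨χ, hχ, rfl⟩ := hmem ψ List.mem_cons_self
            obtain ⟨l0, rfl, hl0⟩ := ih (fun x hx => hmem x (List.mem_cons_of_mem _ hx))
            refine ⟨χ :: l0, rfl, ?_⟩
            intro a ha
            rcases List.mem_cons.1 ha with rfl | ha'
            exacts [hχ, hl0 a ha']
        obtain ⟨l0, rfl, hl0⟩ := hpre l hl
        rw [← impChain_map Φ l0 φ] at hc
        have hU : U ⊨ᵇ impChain l0 φ :=
          (Φ.provable_iff _).2 (models_mono (Set.empty_subset V) hc)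
        exact models_of_impChain (hUU' _ hU) hl0
  · -- zag
    intro V' hVV'
    refine ⟨{φ | V' ⊨ᵇ Φ.toFun φ}, ?_, ⟨{ Φ with provable_iff := ?_ }⟩⟩
    · intro χ hU
      exact Theory.models_sentence_of_mem (hVV' _ ((Φ.provable_iff χ).1 hU))
    · intro φ
      constructor
      · intro hφ
        obtain ⟨l, hl, hc⟩ := exists_impChain_of_models hφ
        have hV : V ⊨ᵇ Φ.toFun (impChain l φ) :=
          (Φ.provable_iff _).1 (models_mono (Set.empty_subset U) hc)
        rw [impChain_map Φ l φ] at hV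
        refine models_of_impChain (hVV' _ hV) ?_
        intro ψ hψ
        obtain ⟨χ, hχ, rfl⟩ := List.mem_map.1 hψ
        exact hl χ hχ
      · intro hφ
        exact Theory.models_sentence_of_mem hφ

end Formalization
end

section
/- Let U be a consistent RE theory and let U₀ be a finitely axiomatized sub-theory of U in the same language. Suppose Φ is a computable function from the natural numbers to the sentences of U, and X, Y is a pair of recursively inseparable sets of natural numbers. Suppose Φ maps every element of X to a theorem of U₀ and every element of Y to a sentence refuted by U. Then U is essentially hereditarily undecidable. -/
open FirstOrder Language

namespace Formalization

/-- Disjoint sets `X`, `Y` of naturals are recursively inseparable if there is no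
computable set containing `X` and disjoint from `Y`. -/
def RecInseparable (X Y : Set ℕ) : Prop :=
  ¬ ∃ C : Set ℕ, ComputablePred (· ∈ C) ∧ X ⊆ C ∧ ∀ y ∈ Y, y ∉ C


section Aux

theorem encode_list_map {γ : Type*} [Encodable γ] (l : List γ) :
    Encodable.encode l = Encodable.encode (l.map Encodable.encode) := by
  induction l with
  | nil => rfl
  | cons a l ih => simp [Encodable.encode_list_cons, ih]

variable {L : Language} [∀ n, Encodable (L.Functions n)] [∀ n, Encodable (L.Relations n)]

theorem sentence_encode_eq (φ : L.Sentence) :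
    Encodable.encode φ =
      Encodable.encode ((φ.listEncode).map Encodable.encode : List ℕ) :=
  encode_list_map _

theorem imp_step (ψ : L.Sentence) :
    ∃ e : ℕ → ℕ, Computable e ∧ ∀ φ : L.Sentence,
      e (Encodable.encode φ) = Encodable.encode (ψ.imp φ) := by
  classical
  let A : List ℕ :=
    ((Sum.inr (Sum.inr 0) :: ψ.listEncode :
        List ((Σ k, L.Term (Empty ⊕ Fin k)) ⊕ ((Σ n, L.Relations n) ⊕ ℕ))).map
      Encodable.encode)
  refine ⟨fun m => Encodable.encode (A ++ Denumerable.ofNat (List ℕ) m), ?_, ?_⟩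
  · exact (Primrec.encode.comp
      ((Primrec.list_append).comp (Primrec.const A) (Primrec.ofNat _))).to_comp
  · intro φ
    show Encodable.encode (A ++ Denumerable.ofNat (List ℕ) (Encodable.encode φ)) = _
    rw [sentence_encode_eq φ, Denumerable.ofNat_encode, sentence_encode_eq (ψ.imp φ)]
    congr 1
    show A ++ _ = _
    simp only [BoundedFormula.listEncode, A]
    simp

theorem chain_step (l : List L.Sentence) :
    ∃ e : ℕ → ℕ, Computable e ∧ ∀ φ : L.Sentence,
      e (Encodable.encode φ) = Encodable.encode (l.foldr BoundedFormula.imp φ) := by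
  induction l with
  | nil => exact ⟨id, Computable.id, fun _ => rfl⟩
  | cons ψ l ih =>
    obtain ⟨e, he, hee⟩ := ih
    obtain ⟨e', he', hee'⟩ := imp_step ψ
    refine ⟨e' ∘ e, he'.comp he, fun φ => ?_⟩
    show e' (e (Encodable.encode φ)) = _
    rw [hee, hee']
    rfl

theorem realize_foldr_imp {M : Type*} [L.Structure M] (l : List L.Sentence) (φ : L.Sentence) :
    M ⊨ (l.foldr BoundedFormula.imp φ) ↔ ((∀ ψ ∈ l, M ⊨ ψ) → M ⊨ φ) := by
  induction l with
  | nil => simp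
  | cons ψ l ih =>
    have himp : M ⊨ (ψ.imp (l.foldr BoundedFormula.imp φ)) ↔
        (M ⊨ ψ → M ⊨ (l.foldr BoundedFormula.imp φ)) :=
      BoundedFormula.realize_imp
    rw [List.foldr_cons, himp, ih]
    constructor
    · intro h hall
      exact h (hall ψ List.mem_cons_self) fun χ hχ => hall χ (List.mem_cons_of_mem _ hχ)
    · intro h hψ hl
      refine h fun χ hχ => ?_
      rcases List.mem_cons.mp hχ with rfl | hm
      exacts [hψ, hl χ hm]

end Aux

/-- Hanf's lemma: let `U` be a consistent r.e. theory, `U₀` a finitely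
axiomatized sub-theory of `U`, and let a computable `Φ` map a pair of recursively
inseparable sets into the theorems of `U₀`, respectively the sentences refuted by `U`.
Then `U` is essentially hereditarily undecidable. -/
theorem statement_9 {L : Language} [∀ n, Encodable (L.Functions n)]
    [∀ n, Encodable (L.Relations n)] (U : L.Theory) (hre : IsRE U) (hcon : Consistent U)
    (U₀ : Finset L.Sentence) (hsub : Extends (↑U₀ : L.Theory) U)
    (Φ : ℕ → L.Sentence)
    (hΦ : ∃ f : ℕ → ℕ, Computable f ∧ ∀ n, f n = Encodable.encode (Φ n))
    (X Y : Set ℕ) (hdisj : Disjoint X Y) (hinsep : RecInseparable X Y)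
    (hX : ∀ n ∈ X, (↑U₀ : L.Theory) ⊨ᵇ Φ n) (hY : ∀ n ∈ Y, U ⊨ᵇ ∼(Φ n)) :
    EssHeredUndecidable U := by
  intro W hWre hWcon hUW V hVre hVcon hVW hVdec
  classical
  obtain ⟨f, hf, hfΦ⟩ := hΦ
  obtain ⟨e, he, hee⟩ := chain_step U₀.toList
  set ch : L.Sentence → L.Sentence :=
    fun φ => U₀.toList.foldr BoundedFormula.imp φ with hch
  have hWU₀ : ∀ ψ ∈ U₀, W ⊨ᵇ ψ := fun ψ hψ =>
    hUW ψ (hsub ψ (Theory.models_sentence_of_mem (by exact_mod_cast hψ)))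
  have hmem : ∀ n : ℕ, (e (f n)) ∈ TheoremSet V ↔ V ⊨ᵇ ch (Φ n) := by
    intro n
    have hefn : e (f n) = Encodable.encode (ch (Φ n)) := by rw [hfΦ, hee]
    constructor
    · rintro ⟨φ, hφe, hφ⟩
      rw [hefn] at hφe
      rwa [Encodable.encode_injective hφe] at hφ
    · intro h
      exact ⟨ch (Φ n), hefn.symm, h⟩
  apply hinsep
  refine ⟨{n | V ⊨ᵇ ch (Φ n)}, ?_, ?_, ?_⟩
  · obtain ⟨χ, hχ, hpeq⟩ := ComputablePred.computable_iff.mp hVdec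
    rw [ComputablePred.computable_iff]
    refine ⟨fun n => χ (e (f n)), hχ.comp (he.comp hf), ?_⟩
    funext n
    apply propext
    show (V ⊨ᵇ ch (Φ n)) ↔ _
    rw [← hmem n, congrFun hpeq (e (f n))]
  · intro n hn
    show V ⊨ᵇ ch (Φ n)
    rw [Theory.models_sentence_iff]
    intro M
    refine (realize_foldr_imp _ _).mpr fun hall => ?_
    haveI : (M : Type _) ⊨ (↑U₀ : L.Theory) :=
      (Theory.model_iff _).mpr fun ψ hψ => hall ψ (Finset.mem_toList.mpr hψ)
    exact (hX n hn).realize_sentence M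
  · intro n hn hC
    have hC' : V ⊨ᵇ ch (Φ n) := hC
    apply hWcon
    rw [Theory.models_sentence_iff]
    intro M
    exfalso
    have h2 : (M : Type _) ⊨ ch (Φ n) :=
      Theory.models_sentence_iff.mp (hVW _ hC') M
    have h3 : (M : Type _) ⊨ Φ n :=
      (realize_foldr_imp _ _).mp h2 fun ψ hψ =>
        Theory.models_sentence_iff.mp (hWU₀ ψ (Finset.mem_toList.mp hψ)) M
    have h4 : (M : Type _) ⊨ ∼(Φ n) :=
      Theory.models_sentence_iff.mp (hUW _ (hY n hn)) M
    exact (Sentence.realize_not _).mp h4 h3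

end Formalization
end
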